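/- arXiv:1107.4020 — 2 statements merged into one kernel-verified Lean document; each statement's English description precedes it below -/
import Mathlib

section
/- Consider a doubly reflected BSDE solution $(Y,Z,A)$ with barriers $L\le U$, where $A=K^+-K^-$ is the orthogonal decomposition into nondecreasing processes, satisfying the minimality (Skorokhod) conditions $[Y_{t-}-L_{t-}]dK^+_t = [U_{t-}-Y_{t-}]dK^-_t=0$ and $L\le Y\le U$. Then the jumps of $K^+$ and $K^-$ are controlled by the jumps of the barriers: $\sum_{0<t\le T}\Delta K^+_t \le \sum_{0<t\le T}[\Delta L_t]^-$ and $\sum_{0<t\le T}\Delta K^-_t \le \sum_{0<t\le T}[\Delta U_t]^+$, where $\Delta L_t = L_t-L_{t-}$ and $x^-=\max(-x,0)$, $x^+=\max(x,0)$. -/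
open Set Function
open scoped ENNReal

noncomputable section

/-- pathwise form: for a doubly reflected BSDE solution path `y` with
barriers `l ≤ u`, nondecreasing `k⁺, k⁻` with disjoint jumps, jump relation
`Δy = -Δk⁺ + Δk⁻`, and Skorokhod minimality at jump times, the jumps of `k⁺` (resp. `k⁻`)
are dominated by the negative jumps of `l` (resp. positive jumps of `u`):
`∑_{0<t≤T} Δk⁺_t ≤ ∑_{0<t≤T} [Δl_t]⁻` and `∑_{0<t≤T} Δk⁻_t ≤ ∑_{0<t≤T} [Δu_t]⁺`. -/
theorem stmt11 (T : ℝ) (hT : 0 < T)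
    (y l u kp km : ℝ → ℝ)
    (hkp : Monotone kp) (hkm : Monotone km)
    (hkp0 : kp 0 = 0) (hkm0 : km 0 = 0)
    -- jumps of `y` come only from `A = k⁺ - k⁻` (continuous martingale part)
    (hjump : ∀ t ∈ Ioc (0 : ℝ) T,
      y t - leftLim y t = -(kp t - leftLim kp t) + (km t - leftLim km t))
    -- orthogonality: `k⁺` and `k⁻` never jump together
    (hdisj : ∀ t ∈ Ioc (0 : ℝ) T,
      ¬(leftLim kp t < kp t ∧ leftLim km t < km t))
    -- Skorokhod minimality at jump times
    (hminp : ∀ t ∈ Ioc (0 : ℝ) T, leftLim kp t < kp t → leftLim y t = leftLim l t)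
    (hminm : ∀ t ∈ Ioc (0 : ℝ) T, leftLim km t < km t → leftLim y t = leftLim u t)
    -- barriers
    (hbar : ∀ t ∈ Icc (0 : ℝ) T, l t ≤ y t ∧ y t ≤ u t) :
    (∑' t : (Ioc (0 : ℝ) T), ENNReal.ofReal (kp (t : ℝ) - leftLim kp (t : ℝ))) ≤
        (∑' t : (Ioc (0 : ℝ) T),
          ENNReal.ofReal (max (-(l (t : ℝ) - leftLim l (t : ℝ))) 0)) ∧
      (∑' t : (Ioc (0 : ℝ) T), ENNReal.ofReal (km (t : ℝ) - leftLim km (t : ℝ))) ≤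
        (∑' t : (Ioc (0 : ℝ) T),
          ENNReal.ofReal (max (u (t : ℝ) - leftLim u (t : ℝ)) 0)) := by
  constructor
  · refine ENNReal.tsum_le_tsum fun ⟨t, ht⟩ => ENNReal.ofReal_le_ofReal ?_
    have htI : t ∈ Icc (0 : ℝ) T := ⟨ht.1.le, ht.2⟩
    have hkple : leftLim kp t ≤ kp t := hkp.leftLim_le le_rfl
    rcases eq_or_lt_of_le hkple with heq | hlt
    · simp [← heq, le_max_right]
    · have hkmz : km t - leftLim km t = 0 := by
        have : ¬ leftLim km t < km t := fun h => hdisj t ht ⟨hlt, h⟩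
        have := hkm.leftLim_le (le_refl t)
        linarith [lt_or_ge (leftLim km t) (km t) |>.resolve_left
          (fun h => hdisj t ht ⟨hlt, h⟩)]
      have hj := hjump t ht
      have hm := hminp t ht hlt
      have hly := (hbar t htI).1
      have : kp t - leftLim kp t ≤ -(l t - leftLim l t) := by
        rw [hkmz] at hj; rw [hm] at hj; linarith
      exact this.trans (le_max_left _ _)
  · refine ENNReal.tsum_le_tsum fun ⟨t, ht⟩ => ENNReal.ofReal_le_ofReal ?_
    have htI : t ∈ Icc (0 : ℝ) T := ⟨ht.1.le, ht.2⟩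
    have hkmle : leftLim km t ≤ km t := hkm.leftLim_le le_rfl
    rcases eq_or_lt_of_le hkmle with heq | hlt
    · simp [← heq, le_max_right]
    · have hkpz : kp t - leftLim kp t = 0 := by
        linarith [hkp.leftLim_le (le_refl t),
          (lt_or_ge (leftLim kp t) (kp t)).resolve_left
            (fun h => hdisj t ht ⟨h, hlt⟩)]
      have hj := hjump t ht
      have hm := hminm t ht hlt
      have huy := (hbar t htI).2
      have : km t - leftLim km t ≤ u t - leftLim u t := by
        rw [hkpz] at hj; rw [hm] at hj; linarith
      exact this.trans (le_max_left _ _)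
end
end

section
/- Let $\mathcal{P}$ be a family of probability measures on $(\Omega,\mathcal{F},\mathbb{F})$ satisfying: for every $\mathbb{P}\in\mathcal{P}$, stopping time $\tau$, measures $\mathbb{P}_1,\mathbb{P}_2\in\mathcal{P}(\tau,\mathbb{P}):=\{\mathbb{P}'\in\mathcal{P}: \mathbb{P}'=\mathbb{P}\text{ on }\mathcal{F}_\tau\}$, and any $\mathcal{F}_\tau$-measurable partition $E_1,E_2$ of $\Omega$, the pasted measure $\bar{\mathbb{P}}(E):=\mathbb{P}_1(E\cap E_1)+\mathbb{P}_2(E\cap E_2)$ belongs to $\mathcal{P}(\tau,\mathbb{P})$. Then for any integrable $\xi$, any $\mathbb{P}'\in\mathcal{P}$, stopping time $\tau$, and $\mathbb{P}^1,\mathbb{P}^2\in\mathcal{P}(\tau,\mathbb{P}')$, there exists $\tilde{\mathbb{P}}\in\mathcal{P}(\tau,\mathbb{P}')$ such that $\mathbb{E}^{\tilde{\mathbb{P}}}_\tau[\xi] = \mathbb{E}^{\mathbb{P}^1}_\tau[\xi]\vee\mathbb{E}^{\mathbb{P}^2}_\tau[\xi]$, $\mathbb{P}'$-a.s. -/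
open MeasureTheory Set
open scoped ENNReal

noncomputable section

variable {Ω : Type} {m : MeasurableSpace Ω}

/-- `Pfam(τ, P)`: the members of `Pfam` that agree with `P` on `F_τ`. -/
def MeasSet (Pfam : Set (Measure Ω)) {F : Filtration ℝ m} {τ : Ω → ℝ}
    (hτ : IsStoppingTime F (fun ω => (τ ω : WithTop ℝ))) (P : Measure Ω) : Set (Measure Ω) :=
  {P' ∈ Pfam | ∀ s : Set Ω, MeasurableSet[hτ.measurableSpace] s → P' s = P s}

/-- Stability of `Pfam` under pasting along stopping times. -/
def StableUnderPasting (F : Filtration ℝ m) (Pfam : Set (Measure Ω)) : Prop :=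
  ∀ P ∈ Pfam, ∀ (τ : Ω → ℝ) (hτ : IsStoppingTime F (fun ω => (τ ω : WithTop ℝ))),
    ∀ P1 ∈ MeasSet Pfam hτ P, ∀ P2 ∈ MeasSet Pfam hτ P, ∀ E1 : Set Ω,
      MeasurableSet[hτ.measurableSpace] E1 →
      (P1.restrict E1 + P2.restrict E1ᶜ) ∈ MeasSet Pfam hτ P

/-- under stability under pasting, for any integrable `ξ`, `P' ∈ Pfam`,
stopping time `τ` and `P¹, P² ∈ Pfam(τ, P')`, there is `P̃ ∈ Pfam(τ, P')` with
`E^{P̃}_τ[ξ] = E^{P¹}_τ[ξ] ∨ E^{P²}_τ[ξ]`, `P'`-a.s. -/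
theorem stmt12 (F : Filtration ℝ m) (Pfam : Set (Measure Ω))
    (hprob : ∀ P ∈ Pfam, IsProbabilityMeasure P)
    (hpaste : StableUnderPasting F Pfam)
    (ξ : Ω → ℝ) (hξ : ∀ P ∈ Pfam, Integrable ξ P)
    (P' : Measure Ω) (hP' : P' ∈ Pfam)
    (τ : Ω → ℝ) (hτ : IsStoppingTime F (fun ω => (τ ω : WithTop ℝ)))
    (P1 : Measure Ω) (hP1 : P1 ∈ MeasSet Pfam hτ P')
    (P2 : Measure Ω) (hP2 : P2 ∈ MeasSet Pfam hτ P') :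
    ∃ Pt ∈ MeasSet Pfam hτ P',
      (fun ω => max ((P1[ξ|hτ.measurableSpace]) ω) ((P2[ξ|hτ.measurableSpace]) ω))
        =ᵐ[P'] Pt[ξ|hτ.measurableSpace] := by

  classical
  have hG : hτ.measurableSpace ≤ m := hτ.measurableSpace_le
  set g1 := P1[ξ|hτ.measurableSpace] with hg1def
  set g2 := P2[ξ|hτ.measurableSpace] with hg2def
  have hg1m : StronglyMeasurable[hτ.measurableSpace] g1 := stronglyMeasurable_condExp
  have hg2m : StronglyMeasurable[hτ.measurableSpace] g2 := stronglyMeasurable_condExp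
  set E : Set Ω := {ω | g2 ω ≤ g1 ω} with hEdef
  have hE : MeasurableSet[hτ.measurableSpace] E :=
    measurableSet_le hg2m.measurable hg1m.measurable
  set Pt : Measure Ω := P1.restrict E + P2.restrict Eᶜ with hPtdef
  have hPtmem : Pt ∈ MeasSet Pfam hτ P' := hpaste P' hP' τ hτ P1 hP1 P2 hP2 E hE
  refine ⟨Pt, hPtmem, ?_⟩
  haveI := hprob Pt hPtmem.1
  haveI := hprob P1 hP1.1
  haveI := hprob P2 hP2.1
  set f : Ω → ℝ := fun ω => max (g1 ω) (g2 ω) with hfdef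
  have hfm : StronglyMeasurable[hτ.measurableSpace] f :=
    letI : MeasurableSpace Ω := hτ.measurableSpace
    Measurable.stronglyMeasurable (hg1m.measurable.max hg2m.measurable)
  have hfE : ∀ ω ∈ E, f ω = g1 ω := fun ω hω => max_eq_left hω
  have hfEc : ∀ ω ∈ Eᶜ, f ω = g2 ω := fun ω hω =>
    max_eq_right (le_of_lt (not_le.mp hω))
  have hfg1 : f =ᵐ[P1.restrict E] g1 := ae_restrict_of_forall_mem (hG E hE) hfE
  have hfg2 : f =ᵐ[P2.restrict Eᶜ] g2 :=
    ae_restrict_of_forall_mem (hG E hE).compl hfEc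
  have hint1 : Integrable f (P1.restrict E) :=
    (integrable_condExp.integrableOn (s := E)).congr hfg1.symm
  have hint2 : Integrable f (P2.restrict Eᶜ) :=
    (integrable_condExp.integrableOn (s := Eᶜ)).congr hfg2.symm
  have hfint : Integrable f Pt := by
    rw [hPtdef, integrable_add_measure]
    exact ⟨hint1, hint2⟩
  have key : f =ᵐ[Pt] Pt[ξ|hτ.measurableSpace] := by
    refine ae_eq_condExp_of_forall_setIntegral_eq hG (hξ Pt hPtmem.1)
      (fun s hs _ => hfint.integrableOn) (fun s hs _ => ?_)
      hfm.aestronglyMeasurable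
    have hsm : MeasurableSet s := hG s hs
    have hrest : Pt.restrict s = P1.restrict (s ∩ E) + P2.restrict (s ∩ Eᶜ) := by
      rw [hPtdef, Measure.restrict_add, Measure.restrict_restrict hsm,
        Measure.restrict_restrict hsm]
    have hfg1' : f =ᵐ[P1.restrict (s ∩ E)] g1 :=
      ae_restrict_of_forall_mem (hsm.inter (hG E hE)) fun ω hω => hfE ω hω.2
    have hfg2' : f =ᵐ[P2.restrict (s ∩ Eᶜ)] g2 :=
      ae_restrict_of_forall_mem (hsm.inter (hG E hE).compl) fun ω hω => hfEc ω hω.2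
    have hintf1 : Integrable f (P1.restrict (s ∩ E)) :=
      (integrable_condExp.integrableOn (s := s ∩ E)).congr hfg1'.symm
    have hintf2 : Integrable f (P2.restrict (s ∩ Eᶜ)) :=
      (integrable_condExp.integrableOn (s := s ∩ Eᶜ)).congr hfg2'.symm
    have hES : MeasurableSet[hτ.measurableSpace] (s ∩ E) := hs.inter hE
    have hEcS : MeasurableSet[hτ.measurableSpace] (s ∩ Eᶜ) := hs.inter hE.compl
    calc ∫ x in s, f x ∂Pt
        = ∫ x, f x ∂(P1.restrict (s ∩ E)) + ∫ x, f x ∂(P2.restrict (s ∩ Eᶜ)) := by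
          show ∫ x, f x ∂(Pt.restrict s) = _
          rw [hrest, integral_add_measure hintf1 hintf2]
      _ = ∫ x, g1 x ∂(P1.restrict (s ∩ E)) + ∫ x, g2 x ∂(P2.restrict (s ∩ Eᶜ)) := by
          rw [integral_congr_ae hfg1', integral_congr_ae hfg2']
      _ = ∫ x in s ∩ E, ξ x ∂P1 + ∫ x in s ∩ Eᶜ, ξ x ∂P2 := by
          rw [hg1def, hg2def, setIntegral_condExp hG (hξ P1 hP1.1) hES,
            setIntegral_condExp hG (hξ P2 hP2.1) hEcS]
      _ = ∫ x in s, ξ x ∂Pt := by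
          show _ = ∫ x, ξ x ∂(Pt.restrict s)
          rw [hrest, integral_add_measure ((hξ P1 hP1.1).integrableOn)
            ((hξ P2 hP2.1).integrableOn)]
  -- transfer from Pt-a.e. to P'-a.e.
  have hhm : StronglyMeasurable[hτ.measurableSpace] (Pt[ξ|hτ.measurableSpace]) :=
    stronglyMeasurable_condExp
  have hN : MeasurableSet[hτ.measurableSpace] {ω | f ω ≠ (Pt[ξ|hτ.measurableSpace]) ω} :=
    (measurableSet_eq_fun hfm.measurable hhm.measurable).compl
  have hPtN : Pt {ω | f ω ≠ (Pt[ξ|hτ.measurableSpace]) ω} = 0 := key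
  have hP'N : P' {ω | f ω ≠ (Pt[ξ|hτ.measurableSpace]) ω} = 0 :=
    (hPtmem.2 _ hN) ▸ hPtN
  exact hP'N
end
end
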